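/- Let V be a subspace of 𝔽_q[x₁,…,x_m] with property (*). Then for every L ⊆ V, q^(m−1)·|L|² ≤ Σ_{f,f'∈L} N_q(f − f') ≤ q^(m−1)·|L|² + q^(dim V − 1)·|L|, where N_q(g) = |{α ∈ 𝔽_q^m : g(α) = 0}|. -/

import Mathlib

open Finset

private lemma aux_pow_inj {F : Type} [Field F] [Fintype F] {k : ℕ} (hk : 0 < k)
    (h : Nat.gcd k (Fintype.card F - 1) = 1) {a b : F} (hab : a ^ k = b ^ k) : a = b := by
  classical
  rcases eq_or_ne a 0 with rfl | ha
  · rw [zero_pow hk.ne', eq_comm, pow_eq_zero_iff hk.ne'] at hab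
    exact hab.symm
  rcases eq_or_ne b 0 with rfl | hb
  · rw [zero_pow hk.ne', pow_eq_zero_iff hk.ne'] at hab
    exact hab
  have hco : (Nat.card Fˣ).Coprime k := by
    rw [Nat.card_eq_fintype_card, Fintype.card_units]
    exact Nat.Coprime.symm h
  have hu : Units.mk0 a ha ^ k = Units.mk0 b hb ^ k := by
    ext
    simpa using hab
  have := hco.pow_left_bijective.injective hu
  simpa using congrArg Units.val this

private lemma aux_sum_comp {F : Type} [Field F] [Fintype F] {G : Type*} [AddCommGroup G]
    [Fintype G] {ψ : AddChar F ℂ} (hψ : ψ ≠ 1) (h : G →+ F) (hs : Function.Surjective h) :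
    ∑ g : G, ψ (h g) = 0 := by
  have h1 : ψ.compAddMonoidHom h ≠ 1 := by
    intro hc
    apply hψ
    ext t
    obtain ⟨g, rfl⟩ := hs t
    have := DFunLike.congr_fun hc g
    simpa using this
  simpa using AddChar.sum_eq_zero_of_ne_one h1

set_option maxHeartbeats 1000000 in
/-- Two-sided incidence bound for a set of multivariate polynomials from a subspace `V` with
property (*): `q^(m−1)|L|² ≤ Σ_{f,f'∈L} N_q(f−f') ≤ q^(m−1)|L|² + q^(dim V −1)|L|`. -/
theorem stmt13 {m : ℕ} {F : Type} [Field F] [Fintype F] [DecidableEq F] (hm : 0 < m)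
    (V : Submodule F (MvPolynomial (Fin m) F)) (I : Finset (Fin m →₀ ℕ))
    (hV : V = Submodule.span F ((fun d => MvPolynomial.monomial d (1 : F)) '' I))
    (h0 : (0 : Fin m →₀ ℕ) ∈ I)
    (hpure : ∀ j : Fin m, ∃ k : ℕ, 0 < k ∧ Nat.gcd k (Fintype.card F - 1) = 1 ∧
      Finsupp.single j k ∈ I)
    (L : Finset (MvPolynomial (Fin m) F)) (hL : ∀ f ∈ L, f ∈ V) :
    Fintype.card F ^ (m - 1) * L.card ^ 2 ≤
      (∑ f ∈ L, ∑ f' ∈ L, (Finset.univ.filter fun a : Fin m → F =>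
        MvPolynomial.eval a (f - f') = 0).card) ∧
    (∑ f ∈ L, ∑ f' ∈ L, (Finset.univ.filter fun a : Fin m → F =>
        MvPolynomial.eval a (f - f') = 0).card) ≤
      Fintype.card F ^ (m - 1) * L.card ^ 2 +
        Fintype.card F ^ (Module.finrank F V - 1) * L.card := by
  classical
  haveI hVfd : FiniteDimensional F V := by
    rw [hV]
    exact FiniteDimensional.span_of_finite F ((I.finite_toSet).image _)
  haveI : Finite (Module.Dual F V) := Module.finite_of_finite F
  haveI : Fintype (Module.Dual F V) := Fintype.ofFinite _
  set q := Fintype.card F with hq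
  have hq0 : 0 < q := Fintype.card_pos
  set d := Module.finrank F V with hd
  set SUM := (∑ f ∈ L, ∑ f' ∈ L, (Finset.univ.filter fun a : Fin m → F =>
        MvPolynomial.eval a (f - f') = 0).card) with hSUM
  set ψ := AddChar.FiniteField.primitiveChar_to_Complex F with hψdef
  have hψprim : ψ.IsPrimitive := AddChar.FiniteField.primitiveChar_to_Complex_isPrimitive F
  have hψ1 : ψ ≠ 1 := by
    intro hc
    have h2 := hψprim (a := 1) one_ne_zero
    rw [AddChar.mulShift_one, hc] at h2
    exact h2 rfl
  -- memberships
  have h1V : (1 : MvPolynomial (Fin m) F) ∈ V := by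
    rw [hV]
    refine Submodule.subset_span ⟨0, h0, ?_⟩
    simp [MvPolynomial.monomial_zero']
  have hxV : ∀ (j : Fin m) (k : ℕ), Finsupp.single j k ∈ I →
      (MvPolynomial.monomial (Finsupp.single j k) (1 : F)) ∈ V := by
    intro j k hk
    rw [hV]
    exact Submodule.subset_span ⟨_, hk, rfl⟩
  -- evaluation functionals
  have heval : ∀ a : Fin m → F, ∃ e : Module.Dual F V,
      ∀ g : V, e g = MvPolynomial.eval a g.1 := by
    intro a
    refine ⟨{ toFun := fun g => MvPolynomial.eval a g.1,
              map_add' := by intros; simp,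
              map_smul' := by intros; simp [MvPolynomial.smul_eval] }, fun g => rfl⟩
  choose ev hev using heval
  set φ : F × (Fin m → F) → Module.Dual F V := fun p => p.1 • ev p.2 with hφ
  have hφapp : ∀ (c : F) (a : Fin m → F) (g : V),
      φ (c, a) g = c * MvPolynomial.eval a g.1 := by
    intro c a g
    rw [hφ]
    simp [hev, smul_eq_mul]
  set T : Module.Dual F V → ℂ := fun ℓ => ∑ f ∈ L.attach, ψ (ℓ ⟨f.1, hL f.1 f.2⟩) with hT
  set S : F × (Fin m → F) → ℂ :=
    fun p => ∑ f ∈ L, ψ (p.1 * MvPolynomial.eval p.2 f) with hS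
  have hST : ∀ p : F × (Fin m → F), S p = T (φ p) := by
    rintro ⟨c, a⟩
    rw [hS, hT]
    beta_reduce
    rw [← Finset.sum_attach L (fun f => ψ (c * MvPolynomial.eval a f))]
    exact Finset.sum_congr rfl fun f _ => by rw [hφapp]
  -- per-pair character sum identity
  have hpair : ∀ g : MvPolynomial (Fin m) F,
      ∑ p : F × (Fin m → F), ψ (p.1 * MvPolynomial.eval p.2 g)
      = (q : ℂ) * ((Finset.univ.filter fun a : Fin m → F =>
          MvPolynomial.eval a g = 0).card : ℂ) := by
    intro g
    rw [Fintype.sum_prod_type, Finset.sum_comm]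
    have hc : ∀ a : Fin m → F, ∑ c : F, ψ (c * MvPolynomial.eval a g)
        = if MvPolynomial.eval a g = 0 then (q : ℂ) else 0 := by
      intro a
      rw [AddChar.sum_mulShift _ hψprim]
      split_ifs <;> simp [hq]
    simp_rw [hc]
    rw [← Finset.sum_filter, Finset.sum_const, nsmul_eq_mul, mul_comm]
  -- master identity in ℂ
  have hA : ∑ p : F × (Fin m → F), S p * (starRingEnd ℂ) (S p)
      = (q : ℂ) * (SUM : ℂ) := by
    have hexp : ∀ p : F × (Fin m → F), S p * (starRingEnd ℂ) (S p)
        = ∑ r ∈ L ×ˢ L, ψ (p.1 * MvPolynomial.eval p.2 (r.1 - r.2)) := by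
      intro p
      rw [hS, map_sum, Finset.sum_mul_sum, ← Finset.sum_product']
      refine Finset.sum_congr rfl fun r _ => ?_
      rw [← AddChar.map_neg_eq_conj, ← AddChar.map_add_eq_mul]
      congr 1
      rw [map_sub]
      ring
    simp_rw [hexp]
    rw [Finset.sum_comm]
    simp_rw [hpair]
    rw [← Finset.mul_sum]
    congr 1
    rw [hSUM]
    push_cast
    rw [← Finset.sum_product']
  -- split off c = 0
  have hzt : ∀ a : Fin m → F, S (0, a) = (L.card : ℂ) := by
    intro a
    rw [hS]
    simp
  have hsplit : ∑ p : F × (Fin m → F), S p * (starRingEnd ℂ) (S p)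
      = (q : ℂ) ^ m * (L.card : ℂ) ^ 2
        + ∑ c ∈ (Finset.univ.erase (0 : F)), ∑ a : Fin m → F,
            S (c, a) * (starRingEnd ℂ) (S (c, a)) := by
    rw [Fintype.sum_prod_type, ← Finset.add_sum_erase _ _ (Finset.mem_univ (0 : F))]
    congr 1
    simp_rw [hzt]
    rw [Finset.sum_const]
    have : (Finset.univ : Finset (Fin m → F)).card = q ^ m := by
      simp [hq]
    rw [this, Complex.conj_natCast]
    push_cast
    ring
  set R : ℝ := ∑ c ∈ (Finset.univ.erase (0 : F)), ∑ a : Fin m → F,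
      Complex.normSq (S (c, a)) with hR
  have hRC : ∑ c ∈ (Finset.univ.erase (0 : F)), ∑ a : Fin m → F,
      S (c, a) * (starRingEnd ℂ) (S (c, a)) = (R : ℂ) := by
    rw [hR]
    push_cast
    simp_rw [Complex.mul_conj]
  have hR0 : 0 ≤ R := by
    rw [hR]
    exact Finset.sum_nonneg fun c _ => Finset.sum_nonneg fun a _ => Complex.normSq_nonneg _
  -- main real identity
  have hmain : (q : ℝ) * (SUM : ℝ) = (q : ℝ) ^ m * (L.card : ℝ) ^ 2 + R := by
    have hC : (((q : ℝ) * (SUM : ℝ) : ℝ) : ℂ)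
        = (((q : ℝ) ^ m * (L.card : ℝ) ^ 2 + R : ℝ) : ℂ) := by
      push_cast
      rw [← hA, hsplit, hRC]
    exact_mod_cast hC
  -- lower bound
  have hlow : q ^ (m - 1) * L.card ^ 2 ≤ SUM := by
    have h1 : (q : ℝ) ^ m * (L.card : ℝ) ^ 2 ≤ (q : ℝ) * (SUM : ℝ) := by
      rw [hmain]; linarith
    have h2 : q ^ m * L.card ^ 2 ≤ q * SUM := by exact_mod_cast h1
    have h3 : q * (q ^ (m - 1) * L.card ^ 2) ≤ q * SUM := by
      rw [← mul_assoc, ← pow_succ', Nat.sub_add_cancel hm]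
      exact h2
    exact Nat.le_of_mul_le_mul_left h3 hq0
  refine ⟨hlow, ?_⟩
  -- injectivity of φ on nonzero c
  have hinj : ∀ p ∈ (Finset.univ.erase (0 : F)) ×ˢ (Finset.univ : Finset (Fin m → F)),
      ∀ p' ∈ (Finset.univ.erase (0 : F)) ×ˢ (Finset.univ : Finset (Fin m → F)),
      φ p = φ p' → p = p' := by
    rintro ⟨c, a⟩ hp ⟨c', a'⟩ hp' hpp
    have hc : c ≠ 0 := (Finset.mem_erase.mp (Finset.mem_product.mp hp).1).1
    have hcc : c = c' := by
      have h1 := congrArg (fun ℓ : Module.Dual F V => ℓ ⟨1, h1V⟩) hpp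
      simpa [hφapp] using h1
    have haa : a = a' := by
      by_contra hne
      obtain ⟨j, hj⟩ := Function.ne_iff.mp hne
      obtain ⟨k, hk0, hkgcd, hkI⟩ := hpure j
      have h2 := congrArg (fun ℓ : Module.Dual F V =>
        ℓ ⟨MvPolynomial.monomial (Finsupp.single j k) (1 : F), hxV j k hkI⟩) hpp
      simp only [hφapp] at h2
      rw [← hcc] at h2
      have h3 : MvPolynomial.eval a (MvPolynomial.monomial (Finsupp.single j k) (1 : F))
          = MvPolynomial.eval a' (MvPolynomial.monomial (Finsupp.single j k) (1 : F)) :=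
        mul_left_cancel₀ hc h2
      rw [MvPolynomial.eval_monomial, MvPolynomial.eval_monomial, one_mul, one_mul,
        Finsupp.prod_single_index (by simp), Finsupp.prod_single_index (by simp)] at h3
      exact hj (aux_pow_inj hk0 hkgcd h3)
    rw [hcc, haa]
  -- dual sum
  have hdualcard : (Fintype.card (Module.Dual F V)) = q ^ d := by
    rw [Module.card_eq_pow_finrank (K := F), Subspace.dual_finrank_eq]
  have hdual : ∑ ℓ : Module.Dual F V, T ℓ * (starRingEnd ℂ) (T ℓ)
      = (q : ℂ) ^ d * (L.card : ℂ) := by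
    have hexp : ∀ ℓ : Module.Dual F V, T ℓ * (starRingEnd ℂ) (T ℓ)
        = ∑ r ∈ L.attach ×ˢ L.attach,
            ψ (ℓ (⟨r.1.1, hL r.1.1 r.1.2⟩ - ⟨r.2.1, hL r.2.1 r.2.2⟩)) := by
      intro ℓ
      rw [hT, map_sum, Finset.sum_mul_sum, ← Finset.sum_product']
      refine Finset.sum_congr rfl fun r _ => ?_
      rw [← AddChar.map_neg_eq_conj, ← AddChar.map_add_eq_mul]
      congr 1
      rw [map_sub]
      ring
    simp_rw [hexp]
    rw [Finset.sum_comm]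
    have hin : ∀ r ∈ L.attach ×ˢ L.attach,
        ∑ ℓ : Module.Dual F V,
          ψ (ℓ (⟨r.1.1, hL r.1.1 r.1.2⟩ - ⟨r.2.1, hL r.2.1 r.2.2⟩))
        = if r.1 = r.2 then ((q : ℂ)) ^ d else 0 := by
      rintro ⟨f, f'⟩ _
      by_cases hff : f = f'
      · subst hff
        simp only [if_pos]
        rw [sub_self]
        simp only [map_zero, AddChar.map_zero_eq_one]
        rw [Finset.sum_const, Finset.card_univ, hdualcard]
        push_cast
        ring
      · rw [if_neg (by simpa using hff)]
        set v : V := ⟨f.1, hL f.1 f.2⟩ - ⟨f'.1, hL f'.1 f'.2⟩ with hv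
        have hvne : v ≠ 0 := by
          rw [hv]
          intro hzero
          apply hff
          have : (f : MvPolynomial (Fin m) F) - (f' : MvPolynomial (Fin m) F) = 0 := by
            have := congrArg (Submodule.subtype V) hzero
            simpa using this
          exact Subtype.ext (sub_eq_zero.mp this)
        obtain ⟨ℓ0, hℓ0⟩ : ∃ ℓ0 : Module.Dual F V, ℓ0 v ≠ 0 := by
          by_contra hno
          push_neg at hno
          exact hvne ((Module.forall_dual_apply_eq_zero_iff F v).mp hno)
        have hsurj : Function.Surjective
            (fun ℓ : Module.Dual F V => ℓ v) := by
          intro t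
          refine ⟨(t * (ℓ0 v)⁻¹) • ℓ0, ?_⟩
          simp [mul_assoc, inv_mul_cancel₀ hℓ0]
        exact aux_sum_comp hψ1
          { toFun := fun ℓ : Module.Dual F V => ℓ v,
            map_zero' := rfl,
            map_add' := fun _ _ => rfl } hsurj
    rw [Finset.sum_congr rfl hin, Finset.sum_product]
    have hdiag : ∀ x ∈ L.attach, (∑ y ∈ L.attach,
        if (x, y).1 = (x, y).2 then ((q : ℂ)) ^ d else 0) = (q : ℂ) ^ d := by
      intro x _
      simp only
      rw [Finset.sum_ite_eq]
      simp
    rw [Finset.sum_congr rfl hdiag, Finset.sum_const, Finset.card_attach]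
    push_cast
    ring
  -- upper bound for R
  have hRupper : R ≤ (q : ℝ) ^ d * (L.card : ℝ) := by
    have h1 : R = ∑ p ∈ (Finset.univ.erase (0 : F)) ×ˢ (Finset.univ : Finset (Fin m → F)),
        Complex.normSq (T (φ p)) := by
      rw [hR, Finset.sum_product]
      exact Finset.sum_congr rfl fun c _ => Finset.sum_congr rfl fun a _ => by rw [hST]
    have h2 : R = ∑ ℓ ∈ ((Finset.univ.erase (0 : F)) ×ˢ
        (Finset.univ : Finset (Fin m → F))).image φ, Complex.normSq (T ℓ) := by
      rw [h1, Finset.sum_image hinj]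
    have h3 : ∑ ℓ ∈ ((Finset.univ.erase (0 : F)) ×ˢ
        (Finset.univ : Finset (Fin m → F))).image φ, Complex.normSq (T ℓ)
        ≤ ∑ ℓ : Module.Dual F V, Complex.normSq (T ℓ) := by
      exact Finset.sum_le_sum_of_subset_of_nonneg (Finset.subset_univ _)
        (fun ℓ _ _ => Complex.normSq_nonneg _)
    have h4 : (∑ ℓ : Module.Dual F V, Complex.normSq (T ℓ)) = (q : ℝ) ^ d * (L.card : ℝ) := by
      have hC : ((∑ ℓ : Module.Dual F V, Complex.normSq (T ℓ) : ℝ) : ℂ)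
          = (((q : ℝ) ^ d * (L.card : ℝ) : ℝ) : ℂ) := by
        push_cast
        simp_rw [← Complex.mul_conj]
        rw [hdual]
        try push_cast
        try ring
      exact_mod_cast hC
    rw [h2]
    rw [h4] at h3
    exact h3
  -- conclude upper bound
  have hup1 : (q : ℝ) * (SUM : ℝ) ≤ (q : ℝ) ^ m * (L.card : ℝ) ^ 2
      + (q : ℝ) ^ d * (L.card : ℝ) := by
    rw [hmain]; linarith
  have hup2 : q * SUM ≤ q ^ m * L.card ^ 2 + q ^ d * L.card := by exact_mod_cast hup1
  have hd1 : 0 < d := by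
    rw [hd]
    refine Module.finrank_pos_iff.mpr ?_
    refine nontrivial_of_ne (⟨1, h1V⟩ : V) 0 ?_
    intro hcon
    have : (1 : MvPolynomial (Fin m) F) = 0 := by
      simpa using congrArg (Submodule.subtype V) hcon
    exact one_ne_zero this
  have hup3 : q * SUM ≤ q * (q ^ (m - 1) * L.card ^ 2 + q ^ (d - 1) * L.card) := by
    rw [Nat.mul_add, ← mul_assoc, ← mul_assoc, ← pow_succ', ← pow_succ',
      Nat.sub_add_cancel hm, Nat.sub_add_cancel hd1]
    exact hup2
  exact Nat.le_of_mul_le_mul_left hup3 hq0
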